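/- Let $w \in S_n$ be a permutation with no fixed points (a derangement). For $r \in [n]$, let $I_r(w) = \{i \in [n] : i <_r w^{-1}(i)\}$ be the shifted anti-exceedance set, where $<_r$ is the cyclic shift of the usual order starting at $r$. Then $|I_1(w)| = |I_2(w)| = \cdots = |I_n(w)|$. -/

import Mathlib

/-- Gale order on subsets of `Fin n`: compare the `h`-th smallest elements. -/
abbrev galeLE {n : ℕ} (I J : Finset (Fin n)) : Prop :=
  I.card = J.card ∧
    ∀ h < I.card, ((I.sort (· ≤ ·)).map Fin.val).getD h 0 ≤ ((J.sort (· ≤ ·)).map Fin.val).getD h 0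

/-- The initial set `y[k] = {y(1),...,y(k)}` of a permutation. -/
def initSet {n : ℕ} (y : Equiv.Perm (Fin n)) (k : ℕ) : Finset (Fin n) :=
  (Finset.univ.filter fun j : Fin n => j.val < k).image y

/-- Bruhat order via the tableau criterion. -/
def bruhatLE {n : ℕ} (u v : Equiv.Perm (Fin n)) : Prop :=
  ∀ k : ℕ, galeLE (initSet u k) (initSet v k)

/-- `v` is `k`-Grassmannian: increasing on the first `k` positions and on the rest. -/
def isGrassmannian {n : ℕ} (v : Equiv.Perm (Fin n)) (k : ℕ) : Prop :=
  (∀ i j : Fin n, i < j → j.val < k → v i < v j) ∧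
    (∀ i j : Fin n, i < j → k ≤ i.val → v i < v j)

/-- The points `a,b,c,d` occur (weakly) in this clockwise cyclic order. -/
abbrev cyclic4 (a b c d : ℕ) : Prop :=
  ((if b < a then 1 else 0) + (if c < b then 1 else 0) +
      (if d < c then 1 else 0) + (if a < d then 1 else 0) : ℕ) ≤ 1

/-- Arcs `i ↦ w i` and `j ↦ w j` form an alignment (in this order):
the points occur clockwise as `i, w i, w j, j`. -/
abbrev isAlignment {n : ℕ} (w : Equiv.Perm (Fin n)) (i j : Fin n) : Prop :=
  i ≠ j ∧ cyclic4 i.val (w i).val (w j).val j.val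

/-- Arcs `i ↦ w i` and `j ↦ w j` form a misalignment (in this order):
the points occur clockwise as `i, w i, j, w j`. -/
abbrev isMisalignment {n : ℕ} (w : Equiv.Perm (Fin n)) (i j : Fin n) : Prop :=
  i ≠ j ∧ cyclic4 i.val (w i).val j.val (w j).val

/-- `x` lies strictly inside the clockwise open arc from `a` to `b`. -/
abbrev cIoo (a b x : ℕ) : Prop :=
  (a < b ∧ a < x ∧ x < b) ∨ (b ≤ a ∧ (x < b ∨ a < x))

/-- Arcs `i ↦ w i` and `j ↦ w j` must cross: exactly one endpoint of the second
arc lies strictly inside the clockwise arc from `i` to `w i`. -/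
abbrev isCrossing {n : ℕ} (w : Equiv.Perm (Fin n)) (i j : Fin n) : Prop :=
  i ≠ j ∧ Xor' (cIoo i.val (w i).val j.val) (cIoo i.val (w i).val (w j).val)

/-- The shifted anti-exceedance set `I_r(w) = {i : i <_r w⁻¹ i}` (0-indexed start `r`). -/
abbrev antiExc {n : ℕ} (w : Equiv.Perm (Fin n)) (r : Fin n) : Finset (Fin n) :=
  Finset.univ.filter fun i => (i - r).val < (w.symm i - r).val

/-- The shifted Gale order `⪯_r`, obtained by rotating so that `r` is smallest. -/
abbrev shiftedGaleLE {n : ℕ} (r : Fin n) (I J : Finset (Fin n)) : Prop :=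
  galeLE (I.image fun x => x - r) (J.image fun x => x - r)

/-- The collection `{y[k] : y ∈ [u,v]}`. -/
def intervalBases {n : ℕ} (u v : Equiv.Perm (Fin n)) (k : ℕ) : Set (Finset (Fin n)) :=
  {I | ∃ y : Equiv.Perm (Fin n), bruhatLE u y ∧ bruhatLE y v ∧ initSet y k = I}



lemma subOneVal {n : ℕ} [NeZero n] (hn : 2 ≤ n) (a : Fin n) (ha : a.val ≠ 0) :
    (a - 1).val = a.val - 1 := by
  have h1 : (1 : Fin n).val = 1 := by
    simp [Fin.val_one', Nat.mod_eq_of_lt (by omega : 1 < n)]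
  have hlt := a.isLt
  rw [Fin.sub_def]
  show (n - (1 : Fin n).val + a.val) % n = a.val - 1
  rw [h1, show n - 1 + a.val = n + (a.val - 1) by omega, Nat.add_mod_left,
    Nat.mod_eq_of_lt (by omega)]

lemma subOneValZero {n : ℕ} [NeZero n] (hn : 2 ≤ n) (a : Fin n) (ha : a.val = 0) :
    (a - 1).val = n - 1 := by
  have h1 : (1 : Fin n).val = 1 := by
    simp [Fin.val_one', Nat.mod_eq_of_lt (by omega : 1 < n)]
  rw [Fin.sub_def]
  show (n - (1 : Fin n).val + a.val) % n = n - 1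
  rw [h1, ha, Nat.add_zero, Nat.mod_eq_of_lt (by omega)]

lemma step {n : ℕ} [NeZero n] (hn : 2 ≤ n) (w : Equiv.Perm (Fin n)) (hw : ∀ i, w i ≠ i)
    (r : Fin n) :
    (Finset.univ.filter fun i : Fin n =>
        (i - (r+1)).val < (w.symm i - (r+1)).val).card
    = (Finset.univ.filter fun i : Fin n => (i - r).val < (w.symm i - r).val).card := by
  have hw' : ∀ i : Fin n, w.symm i ≠ i := by
    intro i h
    apply hw i
    have := congrArg w h
    simpa using this.symm
  have hset : (Finset.univ.filter fun i : Fin n =>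
        (i - (r+1)).val < (w.symm i - (r+1)).val)
      = insert (w r) (((Finset.univ.filter fun i : Fin n =>
        (i - r).val < (w.symm i - r).val)).erase r) := by
    ext i
    simp only [Finset.mem_filter, Finset.mem_univ, true_and, Finset.mem_insert,
      Finset.mem_erase]
    have hsub : ∀ x : Fin n, x - (r + 1) = (x - r) - 1 := by
      intro x; exact sub_add_eq_sub_sub x r 1
    rw [hsub i, hsub (w.symm i)]
    set a := i - r with hadef
    set b := w.symm i - r with hbdef
    have ha0 : a.val = 0 ↔ i = r := by
      constructor
      · intro h; have : a = 0 := Fin.ext (by simpa using h)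
        exact sub_eq_zero.mp this
      · intro h; simp [hadef, h]
    have hb0 : b.val = 0 ↔ i = w r := by
      constructor
      · intro h; have : b = 0 := Fin.ext (by simpa using h)
        have h2 := sub_eq_zero.mp this
        rw [← h2]; simp
      · intro h; simp [hbdef, h]
    have hab : a.val ≠ b.val := by
      intro h
      have : a = b := Fin.ext h
      exact hw' i (sub_left_injective this).symm
    have hwr : w r ≠ r := hw r
    have hbn : b.val < n := b.isLt
    have han : a.val < n := a.isLt
    by_cases hir : i = r
    · have ha : a.val = 0 := ha0.mpr hir
      have hbne : b.val ≠ 0 := fun h => hwr (hir ▸ (hb0.mp h)).symm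
      rw [subOneValZero hn a ha, subOneVal hn b hbne]
      constructor
      · intro h; omega
      · rintro (h | ⟨h, _⟩)
        · exact absurd (hir ▸ h).symm hwr
        · exact absurd hir h
    · by_cases hiwr : i = w r
      · have hb : b.val = 0 := hb0.mpr hiwr
        have hane : a.val ≠ 0 := fun h => hir (ha0.mp h)
        rw [subOneValZero hn b hb, subOneVal hn a hane]
        constructor
        · intro _; left; exact hiwr
        · intro _; omega
      · have hane : a.val ≠ 0 := fun h => hir (ha0.mp h)
        have hbne : b.val ≠ 0 := fun h => hiwr (hb0.mp h)
        rw [subOneVal hn a hane, subOneVal hn b hbne]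
        constructor
        · intro h; right; exact ⟨hir, by omega⟩
        · rintro (h | ⟨_, h⟩)
          · exact absurd h hiwr
          · omega
  have h2 : ∀ i : Fin n, (w.symm i - r).val = 0 ↔ i = w r := by
    intro i
    constructor
    · intro h
      have : w.symm i - r = 0 := Fin.ext (by simpa using h)
      have h2 := sub_eq_zero.mp this
      rw [← h2]; simp
    · intro h; simp [h]
  have hrmem : r ∈ (Finset.univ.filter fun i : Fin n =>
      (i - r).val < (w.symm i - r).val) := by
    simp only [Finset.mem_filter, Finset.mem_univ, true_and]
    have e1 : (r - r).val = 0 := by simp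
    have e2 : (w.symm r - r).val ≠ 0 := fun h => (hw r) ((h2 r).mp h).symm
    omega
  have hwrnot : w r ∉ (Finset.univ.filter fun i : Fin n =>
      (i - r).val < (w.symm i - r).val) := by
    simp only [Finset.mem_filter, Finset.mem_univ, true_and, not_lt]
    have e : (w.symm (w r) - r).val = 0 := (h2 (w r)).mpr rfl
    omega
  rw [hset, Finset.card_insert_of_notMem (fun h => hwrnot (Finset.mem_of_mem_erase h)),
    Finset.card_erase_of_mem hrmem]
  have : 1 ≤ (Finset.univ.filter fun i : Fin n =>
      (i - r).val < (w.symm i - r).val).card := Finset.card_pos.mpr ⟨r, hrmem⟩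
  omega


theorem antiExc_card_const' (n : ℕ) (w : Equiv.Perm (Fin n)) (hw : ∀ i, w i ≠ i) :
    ∀ r r' : Fin n, (Finset.univ.filter fun i : Fin n => (i - r).val < (w.symm i - r).val).card
      = (Finset.univ.filter fun i : Fin n => (i - r').val < (w.symm i - r').val).card := by
  intro r r'
  have hn1 : 0 < n := r.pos
  by_cases hn : 2 ≤ n
  · haveI : NeZero n := ⟨by omega⟩
    have key : ∀ k : ℕ, ∀ hk : k < n,
        (Finset.univ.filter fun i : Fin n =>
          (i - ⟨k, hk⟩).val < (w.symm i - ⟨k, hk⟩).val).card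
        = (Finset.univ.filter fun i : Fin n =>
          (i - ⟨0, hn1⟩).val < (w.symm i - ⟨0, hn1⟩).val).card := by
      intro k
      induction k with
      | zero => intro hk; rfl
      | succ m ih =>
        intro hk
        have hm : m < n := by omega
        have heq : (⟨m + 1, hk⟩ : Fin n) = (⟨m, hm⟩ : Fin n) + 1 := by
          apply Fin.ext
          rw [Fin.add_def]
          show m + 1 = ((⟨m, hm⟩ : Fin n).val + (1 : Fin n).val) % n
          have h1 : (1 : Fin n).val = 1 := by
            simp [Fin.val_one', Nat.mod_eq_of_lt (by omega : 1 < n)]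
          rw [h1, Nat.mod_eq_of_lt hk]
        rw [heq, step hn w hw ⟨m, hm⟩]
        exact ih hm
    have e1 := key r.val r.isLt
    have e2 := key r'.val r'.isLt
    simp only [Fin.eta] at e1 e2
    rw [e1, e2]
  · have hn1' : n = 1 := by omega
    subst hn1'
    exact absurd (Subsingleton.elim (w 0) 0) (hw 0)


/-- All shifted anti-exceedance sets of a derangement have the same cardinality. -/
theorem antiExc_card_const (n : ℕ) (w : Equiv.Perm (Fin n)) (hw : ∀ i, w i ≠ i) :
    ∀ r r' : Fin n, (antiExc w r).card = (antiExc w r').card :=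
  antiExc_card_const' n w hw
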